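/- Let (λ_i)_{i≥1} be positive reals with λ₁ ≤ λ₂ ≤ … and suppose ∑_{i=1}^∞ e^{-tλ_i} = A t^{-2} + O(t^{-1}) as t → 0+, for some A > 0. Then ∑_{i=1}^∞ λ_i^{-2} e^{-2ελ_i} = A log(1/ε) + O(1) as ε → 0+. -/

import Mathlib

open Set Filter MeasureTheory Topology

lemma aux_int {L : ℝ} (hL : 0 < L) {b a : ℝ} (hba : b ≤ a) :
    IntegrableOn (fun t => (t - b) * Real.exp (-t * L)) (Set.Ioi a) ∧
    ∫ t in Set.Ioi a, (t - b) * Real.exp (-t * L)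
      = ((a - b) * L + 1) * Real.exp (-a * L) / L ^ 2 := by
  set F : ℝ → ℝ := fun t => -(((t - b) * L + 1) * Real.exp (-t * L)) / L ^ 2 with hF
  have hderiv : ∀ x : ℝ, HasDerivAt F ((x - b) * Real.exp (-x * L)) x := by
    intro x
    have h1 : HasDerivAt (fun t : ℝ => (t - b) * L + 1) L x := by
      simpa using (((hasDerivAt_id x).sub_const b).mul_const L).add_const 1
    have h0 : HasDerivAt (fun t : ℝ => -t * L) (-L) x := by
      simpa using ((hasDerivAt_id x).neg.mul_const L)
    have h2 : HasDerivAt (fun t : ℝ => Real.exp (-t * L)) (Real.exp (-x * L) * (-L)) x :=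
      h0.exp
    have h3 := ((h1.mul h2).neg).div_const (L ^ 2)
    refine h3.congr_deriv ?_
    have hL' : L ≠ 0 := hL.ne'
    rw [div_eq_iff (pow_ne_zero 2 hL')]
    ring
  have hnn : ∀ x ∈ Set.Ioi a, 0 ≤ (x - b) * Real.exp (-x * L) := fun x hx =>
    mul_nonneg (sub_nonneg.2 (hba.trans (le_of_lt hx))) (Real.exp_pos _).le
  have htend : Tendsto F atTop (𝓝 0) := by
    have t1 : Tendsto (fun t : ℝ => (L * t) * Real.exp (-(L * t))) atTop (𝓝 0) := by
      have := (Real.tendsto_pow_mul_exp_neg_atTop_nhds_zero 1).comp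
        (Filter.Tendsto.const_mul_atTop hL tendsto_id)
      simpa [Function.comp_def] using this
    have t2 : Tendsto (fun t : ℝ => Real.exp (-(L * t))) atTop (𝓝 0) :=
      Real.tendsto_exp_neg_atTop_nhds_zero.comp (Filter.Tendsto.const_mul_atTop hL tendsto_id)
    have key : Tendsto (fun t : ℝ => ((t - b) * L + 1) * Real.exp (-t * L)) atTop (𝓝 0) := by
      have := t1.add (t2.const_mul (1 - b * L))
      rw [show (0:ℝ) + (1 - b*L) * 0 = 0 by ring] at this
      apply this.congr
      intro t
      rw [show -(L * t) = -t * L by ring]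
      ring
    have h4 := (key.neg).div_const (L ^ 2)
    rw [show -(0:ℝ)/L^2 = 0 by ring] at h4
    exact h4
  have hcd : ∀ x ∈ Set.Ici a, HasDerivAt F ((x - b) * Real.exp (-x * L)) x := fun x _ => hderiv x
  refine ⟨integrableOn_Ioi_deriv_of_nonneg' hcd hnn htend, ?_⟩
  rw [integral_Ioi_of_hasDerivAt_of_nonneg' hcd hnn htend]
  have hL' : L ≠ 0 := hL.ne'
  simp only [hF]
  field_simp
  ring

set_option maxHeartbeats 1000000 in
theorem stmt_6 (lam : ℕ → ℝ) (hpos : ∀ i, 0 < lam i) (hmono : Monotone lam)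
    (A : ℝ) (hA : 0 < A)
    (htrace : (fun t : ℝ => (∑' i, Real.exp (-t * lam i)) - A / t ^ 2)
      =O[nhdsWithin 0 (Set.Ioi 0)] fun t : ℝ => t⁻¹) :
    (fun ε : ℝ => (∑' i, ((lam i) ^ 2)⁻¹ * Real.exp (-2 * ε * lam i)) - A * Real.log (1 / ε))
      =O[nhdsWithin 0 (Set.Ioi 0)] fun _ : ℝ => (1 : ℝ) := by
  obtain ⟨c, hc⟩ := htrace.bound
  obtain ⟨δ, hδmem, hδsub⟩ := mem_nhdsGT_iff_exists_Ioc_subset.mp hc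
  have hδ0 : (0:ℝ) < δ := hδmem
  set C := max c 1 with hCdef
  have hC1 : (1:ℝ) ≤ C := le_max_right _ _
  have hC0 : (0:ℝ) < C := lt_of_lt_of_le one_pos hC1
  have hbd : ∀ t ∈ Set.Ioc (0:ℝ) δ,
      |(∑' i, Real.exp (-t * lam i)) - A / t ^ 2| ≤ C / t := by
    intro t ht
    have h := hδsub ht
    simp only [Set.mem_setOf_eq, Real.norm_eq_abs] at h
    have ht0 : 0 < t := ht.1
    rw [abs_inv, abs_of_pos ht0] at h
    calc |(∑' i, Real.exp (-t * lam i)) - A / t ^ 2| ≤ c * t⁻¹ := h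
      _ ≤ C * t⁻¹ := by
          apply mul_le_mul_of_nonneg_right (le_max_left _ _) (by positivity)
      _ = C / t := by rw [div_eq_mul_inv]
  -- summability of the heat trace at every positive time
  have hsum : ∀ t : ℝ, 0 < t → Summable fun i => Real.exp (-t * lam i) := by
    intro t ht
    set t₀ := min t (min δ (A / (2 * C))) with ht₀def
    have ht₀pos : 0 < t₀ := lt_min ht (lt_min hδ0 (by positivity))
    have ht₀δ : t₀ ≤ δ := (min_le_right _ _).trans (min_le_left _ _)
    have ht₀t : t₀ ≤ t := min_le_left _ _
    have hsum0 : Summable fun i => Real.exp (-t₀ * lam i) := by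
      by_contra h
      have h0 : (∑' i, Real.exp (-t₀ * lam i)) = 0 := tsum_eq_zero_of_not_summable h
      have hb := hbd t₀ ⟨ht₀pos, ht₀δ⟩
      rw [h0, zero_sub, abs_neg, abs_of_pos (by positivity : 0 < A / t₀ ^ 2)] at hb
      rw [div_le_div_iff₀ (by positivity) ht₀pos] at hb
      -- hb : A * t₀ ≤ C * t₀ ^ 2
      have h1 : A ≤ C * t₀ := by nlinarith
      have ht₀small : t₀ ≤ A / (2 * C) := (min_le_right _ _).trans (min_le_right _ _)
      have h2 : C * t₀ ≤ A / 2 := by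
        calc C * t₀ ≤ C * (A / (2 * C)) := by
              exact mul_le_mul_of_nonneg_left ht₀small hC0.le
          _ = A / 2 := by field_simp
      linarith
    apply hsum0.of_nonneg_of_le (fun i => (Real.exp_pos _).le)
    intro i
    apply Real.exp_le_exp.2
    nlinarith [hpos i]
  have hlam0 : 0 < lam 0 := hpos 0
  have hlam : ∀ i, lam 0 ≤ lam i := fun i => hmono (Nat.zero_le i)
  set Sδ := ∑' i, Real.exp (-δ * lam i) with hSδ
  set B := (δ / lam 0 + ((lam 0) ^ 2)⁻¹) * Sδ with hB
  set Kc := C * δ + A * (|Real.log δ| + Real.log 2 + 2) + B with hKc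
  rw [Asymptotics.isBigO_iff]
  refine ⟨Kc, ?_⟩
  filter_upwards [Ioc_mem_nhdsGT_of_mem
    (Set.mem_Ico.mpr ⟨le_refl (0:ℝ), half_pos hδ0⟩)] with ε hε
  simp only [norm_one, mul_one, Real.norm_eq_abs]
  obtain ⟨hε0, hεδ⟩ := hε
  set a := 2 * ε with ha
  have ha0 : 0 < a := by positivity
  have haδ : a ≤ δ := by rw [ha]; linarith
  set g : ℕ → ℝ → ℝ := fun i t => (t - a) * Real.exp (-t * lam i) with hg
  have hgint : ∀ i, IntegrableOn (g i) (Set.Ioi a) := fun i => (aux_int (hpos i) le_rfl).1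
  have hval : ∀ i, ∫ t in Set.Ioi a, g i t = ((lam i) ^ 2)⁻¹ * Real.exp (-2 * ε * lam i) := by
    intro i
    rw [hg]
    rw [(aux_int (hpos i) (le_refl a)).2, sub_self, zero_mul, zero_add, one_mul]
    rw [show -a * lam i = -2 * ε * lam i by rw [ha]; ring]
    rw [div_eq_mul_inv, mul_comm]
  -- summability of the integrals
  have hIsumm : Summable (fun i => ∫ t in Set.Ioi a, g i t) := by
    rw [funext hval]
    apply Summable.of_nonneg_of_le (fun i => by positivity)
      (fun i => ?_) ((hsum a ha0).mul_left ((lam 0) ^ 2)⁻¹)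
    rw [show -a * lam i = -2 * ε * lam i by rw [ha]; ring]
    apply mul_le_mul_of_nonneg_right _ (Real.exp_pos _).le
    apply inv_anti₀ (by positivity)
    have := hlam i
    nlinarith
  set J : ℕ → ℝ := fun i => ∫ t in Set.Ioc a δ, g i t with hJ
  set K : ℕ → ℝ := fun i => ∫ t in Set.Ioi δ, g i t with hK
  have hsplitset : Set.Ioc a δ ∪ Set.Ioi δ = Set.Ioi a := Set.Ioc_union_Ioi_eq_Ioi haδ
  have hJint : ∀ i, IntegrableOn (g i) (Set.Ioc a δ) := fun i =>
    (hgint i).mono_set (by rw [← hsplitset]; exact Set.subset_union_left)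
  have hKint : ∀ i, IntegrableOn (g i) (Set.Ioi δ) := fun i =>
    (hgint i).mono_set (by rw [← hsplitset]; exact Set.subset_union_right)
  have hIJK : ∀ i, ∫ t in Set.Ioi a, g i t = J i + K i := by
    intro i
    rw [← hsplitset, setIntegral_union (Set.Ioc_disjoint_Ioi le_rfl) measurableSet_Ioi
      (hJint i) (hKint i)]
  have hgnn : ∀ i, ∀ t, a ≤ t → 0 ≤ g i t := fun i t ht =>
    mul_nonneg (by linarith) (Real.exp_pos _).le
  have hJnn : ∀ i, 0 ≤ J i := fun i =>
    setIntegral_nonneg measurableSet_Ioc (fun t ht => hgnn i t ht.1.le)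
  have hKnn : ∀ i, 0 ≤ K i := fun i =>
    setIntegral_nonneg measurableSet_Ioi (fun t ht => hgnn i t (haδ.trans ht.le))
  have hJle : ∀ i, J i ≤ ∫ t in Set.Ioi a, g i t := fun i => by
    rw [hIJK i]; linarith [hKnn i]
  have hKle : ∀ i, K i ≤ ∫ t in Set.Ioi a, g i t := fun i => by
    rw [hIJK i]; linarith [hJnn i]
  have hJsumm : Summable J := Summable.of_nonneg_of_le hJnn hJle hIsumm
  have hKsumm : Summable K := Summable.of_nonneg_of_le hKnn hKle hIsumm
  have hTsplit : (∑' i, ((lam i) ^ 2)⁻¹ * Real.exp (-2 * ε * lam i))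
      = (∑' i, J i) + ∑' i, K i := by
    rw [← Summable.tsum_add hJsumm hKsumm]
    rw [← funext hval]
    exact tsum_congr hIJK
  -- the swap for J
  set S : ℝ → ℝ := fun t => ∑' i, Real.exp (-t * lam i) with hSdef
  have hswap : (∑' i, J i) = ∫ t in Set.Ioc a δ, (t - a) * S t := by
    have h1 := integral_tsum_of_summable_integral_norm (μ := volume.restrict (Set.Ioc a δ))
      (F := g) hJint ?_
    · rw [hJ]
      simp only []
      rw [h1]
      apply setIntegral_congr_fun measurableSet_Ioc
      intro t ht
      rw [hSdef, hg]
      exact tsum_mul_left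
    · have heq : ∀ i, ∫ t in Set.Ioc a δ, ‖g i t‖ = J i := fun i =>
        setIntegral_congr_fun measurableSet_Ioc
          (fun t ht => Real.norm_of_nonneg (hgnn i t ht.1.le))
      rw [funext heq]
      exact hJsumm
  -- continuity of the sum on [a, δ]
  have hScont : ContinuousOn (fun t => (t - a) * S t) (Set.Icc a δ) := by
    apply ContinuousOn.mul (by fun_prop)
    rw [hSdef]
    apply continuousOn_tsum (fun i => by fun_prop) (hsum a ha0)
    intro i t ht
    rw [Real.norm_of_nonneg (Real.exp_pos _).le]
    apply Real.exp_le_exp.2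
    nlinarith [hpos i, ht.1]
  have hhint : IntegrableOn (fun t => (t - a) * S t) (Set.Ioc a δ) :=
    (hScont.integrableOn_Icc).mono_set Set.Ioc_subset_Icc_self
  -- the model function
  set φ : ℝ → ℝ := fun t => A * (t - a) / t ^ 2 with hφ
  have hφcont : ContinuousOn φ (Set.Icc a δ) := by
    apply ContinuousOn.div (by fun_prop) (by fun_prop)
    intro t ht
    exact pow_ne_zero _ (ne_of_gt (lt_of_lt_of_le ha0 ht.1))
  have hφint : IntegrableOn φ (Set.Ioc a δ) :=
    hφcont.integrableOn_Icc.mono_set Set.Ioc_subset_Icc_self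
  -- pointwise comparison
  have hcomp : ∀ t ∈ Set.Ioc a δ, ‖(t - a) * S t - φ t‖ ≤ C := by
    intro t ht
    have ht0 : 0 < t := ha0.trans ht.1
    have hb := hbd t ⟨ht0, ht.2⟩
    rw [show (t - a) * S t - φ t = (t - a) * (S t - A / t ^ 2) by rw [hφ]; ring]
    rw [Real.norm_eq_abs, abs_mul, abs_of_nonneg (by linarith [ht.1] : (0:ℝ) ≤ t - a)]
    have hb' : |S t - A / t ^ 2| ≤ C / t := by
      simp only [hSdef]; exact hb
    calc (t - a) * |S t - A / t ^ 2| ≤ t * (C / t) :=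
          mul_le_mul (by linarith) hb' (abs_nonneg _) ht0.le
      _ = C := by field_simp
  set Φ := ∫ t in Set.Ioc a δ, φ t with hΦdef
  have hPΦ : ‖(∑' i, J i) - Φ‖ ≤ C * (δ - a) := by
    rw [hswap, hΦdef, ← integral_sub hhint hφint]
    have hCint : Integrable (fun _ : ℝ => C) (volume.restrict (Set.Ioc a δ)) :=
      integrableOn_const (by rw [Real.volume_Ioc]; exact ENNReal.ofReal_ne_top)
    calc ‖∫ t in Set.Ioc a δ, ((t - a) * S t - φ t)‖
        ≤ ∫ _t in Set.Ioc a δ, C :=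
          norm_integral_le_of_norm_le hCint
            ((ae_restrict_iff' measurableSet_Ioc).mpr (ae_of_all _ hcomp))
      _ = C * (δ - a) := by
          rw [setIntegral_const, Real.volume_real_Ioc, max_eq_left (by linarith),
            smul_eq_mul]; ring
  -- value of the model integral
  have hΦ : Φ = A * Real.log δ + A * a / δ - A * Real.log a - A := by
    rw [hΦdef, ← intervalIntegral.integral_of_le haδ]
    rw [intervalIntegral.integral_eq_sub_of_hasDerivAt
      (f := fun t => A * Real.log t + A * a / t) (f' := φ) ?_ ?_]
    · show A * Real.log δ + A * a / δ - (A * Real.log a + A * a / a) = _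
      rw [show A * a / a = A from by field_simp]
      ring
    · intro t ht
      rw [Set.uIcc_of_le haδ] at ht
      have ht0 : 0 < t := lt_of_lt_of_le ha0 ht.1
      have h1 : HasDerivAt (fun t : ℝ => A * Real.log t) (A * t⁻¹) t :=
        (Real.hasDerivAt_log ht0.ne').const_mul A
      have h2 : HasDerivAt (fun t : ℝ => A * a / t) (A * a * -((t ^ 2)⁻¹)) t := by
        simpa [div_eq_mul_inv] using (hasDerivAt_inv ht0.ne').const_mul (A * a)
      have h3 := h1.add h2
      convert h3 using 1
      · rfl
      rw [hφ]
      field_simp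
      ring
    · exact (hφcont.mono (by rw [Set.uIcc_of_le haδ])).intervalIntegrable
  -- distance from Φ to A log(1/ε)
  have hloga : Real.log a = Real.log 2 + Real.log ε := by
    rw [ha, Real.log_mul two_ne_zero hε0.ne']
  have hlog1ε : Real.log (1 / ε) = -Real.log ε := by rw [one_div, Real.log_inv]
  have e2 : |Φ - A * Real.log (1 / ε)| ≤ A * (|Real.log δ| + Real.log 2 + 2) := by
    have eΦ : Φ - A * Real.log (1 / ε)
        = A * (Real.log δ + a / δ - Real.log 2 - 1) := by
      rw [hΦ, hloga, hlog1ε]; ring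
    rw [eΦ, abs_mul, abs_of_pos hA]
    apply mul_le_mul_of_nonneg_left _ hA.le
    have h1 : (0:ℝ) ≤ a / δ := by positivity
    have h2 : a / δ ≤ 1 := div_le_one_of_le₀ haδ hδ0.le
    have h3 : (0:ℝ) ≤ Real.log 2 := Real.log_nonneg one_le_two
    have h5 := le_abs_self (Real.log δ)
    have h6 := neg_abs_le (Real.log δ)
    rw [abs_le]
    constructor <;> linarith
  -- tail bound
  have hKval : ∀ i, K i ≤ (δ / lam 0 + ((lam 0) ^ 2)⁻¹) * Real.exp (-δ * lam i) := by
    intro i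
    have hLi := hpos i
    have hLi0 := hlam i
    have hKeq : K i = ((δ - a) * lam i + 1) * Real.exp (-δ * lam i) / (lam i) ^ 2 := by
      rw [hK]; simp only []; exact (aux_int (hpos i) haδ).2
    rw [hKeq]
    have key : ((δ - a) * lam i + 1) / (lam i) ^ 2 ≤ δ / lam 0 + ((lam 0) ^ 2)⁻¹ := by
      have e1 : ((δ - a) * lam i + 1) / (lam i) ^ 2
          = (δ - a) / lam i + ((lam i) ^ 2)⁻¹ := by field_simp
      rw [e1]
      have hb1 : (δ - a) / lam i ≤ δ / lam 0 :=
        div_le_div₀ hδ0.le (by linarith) hlam0 hLi0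
      have hb2 : ((lam i) ^ 2)⁻¹ ≤ ((lam 0) ^ 2)⁻¹ :=
        inv_anti₀ (by positivity) (by nlinarith)
      linarith
    calc ((δ - a) * lam i + 1) * Real.exp (-δ * lam i) / (lam i) ^ 2
        = (((δ - a) * lam i + 1) / (lam i) ^ 2) * Real.exp (-δ * lam i) := by ring
      _ ≤ (δ / lam 0 + ((lam 0) ^ 2)⁻¹) * Real.exp (-δ * lam i) :=
          mul_le_mul_of_nonneg_right key (Real.exp_pos _).le
  have hKB : (∑' i, K i) ≤ B := by
    rw [hB, hSδ, ← tsum_mul_left]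
    exact Summable.tsum_le_tsum hKval hKsumm (((hsum δ hδ0)).mul_left _)
  have hKnn' : (0:ℝ) ≤ ∑' i, K i := tsum_nonneg hKnn
  -- put everything together
  rw [hTsplit]
  have expand : (∑' i, J i) + (∑' i, K i) - A * Real.log (1 / ε)
      = ((∑' i, J i) - Φ) + (Φ - A * Real.log (1 / ε)) + (∑' i, K i) := by ring
  rw [expand]
  have habs := abs_add_three ((∑' i, J i) - Φ) (Φ - A * Real.log (1 / ε)) (∑' i, K i)
  have e1 : |(∑' i, J i) - Φ| ≤ C * δ := by
    rw [← Real.norm_eq_abs]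
    calc ‖(∑' i, J i) - Φ‖ ≤ C * (δ - a) := hPΦ
      _ ≤ C * δ := mul_le_mul_of_nonneg_left (by linarith) hC0.le
  have e3 : |∑' i, K i| ≤ B := by rw [abs_of_nonneg hKnn']; exact hKB
  rw [hKc]
  linarith
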